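/- Let Δ be a (d−1)-dimensional balanced simplicial complex on [n] with coloring map κ, let 0 ≤ p ≤ d, S = {1,…,p}, T = {p+1,…,d}, and let Θ = θ_1,…,θ_p,θ'_{p+1},…,θ'_d be an l.s.o.p. of A = K[Δ] with θ_i = Σ_{κ(v)=i} x_v for i ≤ p and θ'_i ∈ K[x_v : κ(v) ∈ T] for i > p. Give R the Z^{p+1}-grading with deg x_v = e_{κ(v)} for κ(v) ∈ S and deg x_v = e_0 for κ(v) ∈ T. Let N = ⊕_{F ∈ Δ, κ(F)=S} K[lk_Δ(F)]/(Θ'_T K[lk_Δ(F)]), where Θ'_T = θ'_{p+1},…,θ'_d. Then there exists a surjective degree-preserving homomorphism of R-modules ψ: N(−e_S) → (A/ΘA)_{≥ e_S}, where e_S = Σ_{i∈S} e_i and M_{≥a} = ⊕_{b ≥ a} M_b. -/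

import Mathlib

open Finset BigOperators

namespace BGLB

variable {V : Type*} [DecidableEq V]

/-- `Δ` is an (abstract) simplicial complex: it contains the empty face and is
closed under taking subsets. -/
def IsComplex (Δ : Finset (Finset V)) : Prop :=
  ∅ ∈ Δ ∧ ∀ F ∈ Δ, ∀ G ⊆ F, G ∈ Δ

/-- `Δ` is pure of dimension `d - 1`: every face is contained in a face of cardinality `d`. -/
def IsPure (d : ℕ) (Δ : Finset (Finset V)) : Prop :=
  ∀ F ∈ Δ, ∃ G ∈ Δ, F ⊆ G ∧ G.card = d

/-- `Δ` has dimension at most `d - 1`. -/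
def DimLE (d : ℕ) (Δ : Finset (Finset V)) : Prop := ∀ F ∈ Δ, F.card ≤ d

/-- `Δ` has dimension exactly `d - 1`. -/
def DimEq (d : ℕ) (Δ : Finset (Finset V)) : Prop := DimLE d Δ ∧ ∃ F ∈ Δ, F.card = d

/-- `fNum Δ j` is the number `f_{j-1}(Δ)` of faces of `Δ` of cardinality `j`. -/
def fNum (Δ : Finset (Finset V)) (j : ℕ) : ℕ := (Δ.filter fun F => F.card = j).card

/-- The `h`-numbers of `Δ` with respect to the dimension parameter `d`:
`h_i = ∑_{j=0}^{i} (-1)^{i-j} C(d-j, i-j) f_{j-1}`. -/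
def hNum (d : ℕ) (Δ : Finset (Finset V)) (i : ℕ) : ℤ :=
  ∑ j ∈ Finset.range (i + 1), (-1 : ℤ) ^ (i - j) * ((d - j).choose (i - j)) * fNum Δ j

/-- The balanced `g`-numbers `g̅_i = i h_i - (d - i + 1) h_{i-1}` (with `h_{-1} = 0`). -/
def gbar (d : ℕ) (Δ : Finset (Finset V)) : ℕ → ℤ
  | 0 => 0
  | i + 1 => (i + 1 : ℤ) * hNum d Δ (i + 1) - ((d : ℤ) - (i + 1) + 1) * hNum d Δ i

/-- `κ` is a proper `d`-coloring of (the graph of) `Δ`: the two endpoints of any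
edge get different colors. -/
def IsBalanced (d : ℕ) (Δ : Finset (Finset V)) (κ : V → Fin d) : Prop :=
  ∀ F ∈ Δ, F.card = 2 → ∀ x ∈ F, ∀ y ∈ F, x ≠ y → κ x ≠ κ y

/-- The rank-selected subcomplex `Δ_T = {F ∈ Δ : κ(F) ⊆ T}`. -/
def rankSel {d : ℕ} (Δ : Finset (Finset V)) (κ : V → Fin d) (T : Finset (Fin d)) :
    Finset (Finset V) :=
  Δ.filter fun F => ∀ v ∈ F, κ v ∈ T

/-- The link `lk_Δ(F) = {G ∈ Δ : F ∪ G ∈ Δ, F ∩ G = ∅}`. -/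
def link (Δ : Finset (Finset V)) (F : Finset V) : Finset (Finset V) :=
  Δ.filter fun G => Disjoint F G ∧ F ∪ G ∈ Δ





/-- The Stanley-Reisner ideal of `Δ` in `K[x_v : v ∈ V]`: the ideal generated by the
squarefree monomials `x_F = ∏_{v ∈ F} x_v` for the non-faces `F ∉ Δ`. -/
noncomputable def srIdeal (K : Type*) [Field K] (Δ : Finset (Finset V)) : Ideal (MvPolynomial V K) :=
  Ideal.span {m | ∃ F : Finset V, F ∉ Δ ∧ m = ∏ v ∈ F, MvPolynomial.X v}

/-- The sum of variables of color `i`: `θ_i = ∑_{κ(v) = i} x_v`. -/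
noncomputable def colorSum (K : Type*) [Field K] {n d : ℕ} (κ : Fin n → Fin d) (i : Fin d) :
    MvPolynomial (Fin n) K :=
  ∑ v ∈ Finset.univ.filter (fun v => κ v = i), MvPolynomial.X v

/-- The degree `i` component (w.r.t. the standard grading) of the quotient of a
polynomial ring by the ideal `I`, as the image of the degree `i` homogeneous part. -/
noncomputable def piece (K : Type*) [Field K] {σ : Type*} (I : Ideal (MvPolynomial σ K)) (i : ℕ) :
    Submodule K (MvPolynomial σ K ⧸ I) :=
  (MvPolynomial.homogeneousSubmodule σ K i).map (Ideal.Quotient.mkₐ K I).toLinearMap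

/-- The degree `a` component (w.r.t. the grading weighted by `w`) of the quotient of a
polynomial ring by the ideal `I`. -/
noncomputable def wpiece (K : Type*) [Field K] {σ M : Type*} [AddCommMonoid M] (w : σ → M)
    (I : Ideal (MvPolynomial σ K)) (a : M) :
    Submodule K (MvPolynomial σ K ⧸ I) :=
  (MvPolynomial.weightedHomogeneousSubmodule K w a).map (Ideal.Quotient.mkₐ K I).toLinearMap

/-- `θ` is a linear system of parameters for `(MvPolynomial σ K) ⧸ I`:
a sequence of linear forms such that the quotient by them is a finite-dimensional
`K`-vector space. -/
def IsLSOP (K : Type*) [Field K] {σ : Type*} (I : Ideal (MvPolynomial σ K)) {m : ℕ}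
    (θ : Fin m → MvPolynomial σ K) : Prop :=
  (∀ i, θ i ∈ MvPolynomial.homogeneousSubmodule σ K 1) ∧
    FiniteDimensional K (MvPolynomial σ K ⧸ (I ⊔ Ideal.span (Set.range θ)))

/-- `Δ` (of dimension `d - 1`) is Cohen-Macaulay over `K`: every linear system of
parameters of the Stanley-Reisner ring `K[Δ]` is a regular sequence on `K[Δ]`. -/
def IsCM (K : Type*) [Field K] (d : ℕ) (Δ : Finset (Finset V)) : Prop :=
  ∀ θ : Fin d → MvPolynomial V K, IsLSOP K (srIdeal K Δ) θ →
    RingTheory.Sequence.IsRegular (MvPolynomial V K ⧸ srIdeal K Δ) (List.ofFn θ)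

section Homology

variable [LinearOrder V] [Fintype V] (K : Type*) [Field K]

/-- The faces of `Δ` of cardinality `k`. -/
def Faces (Δ : Finset (Finset V)) (k : ℕ) : Type _ := {F : Finset V // F ∈ Δ ∧ F.card = k}

/-- The simplicial (reduced) boundary map from `k+1`-element faces to `k`-element faces:
`∂(e_F) = ∑_{v ∈ F} (-1)^{|{u ∈ F : u < v}|} e_{F \ v}`, written in the dual basis. -/
noncomputable def bdry (Δ : Finset (Finset V)) (k : ℕ) :
    ((Faces Δ (k + 1) → K) →ₗ[K] (Faces Δ k → K)) :=
  LinearMap.pi fun G =>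
    ∑ v ∈ Finset.univ \ G.1,
      if h : insert v G.1 ∈ Δ ∧ (insert v G.1).card = k + 1 then
        ((-1 : K) ^ (G.1.filter (fun u => u < v)).card) •
          (LinearMap.proj (⟨insert v G.1, h⟩ : Faces Δ (k + 1)))
      else 0

/-- The reduced cycles in cardinality `k`: everything for `k = 0` (chains on the empty
face), and the kernel of the boundary map for `k ≥ 1`. -/
noncomputable def cycles (Δ : Finset (Finset V)) : (k : ℕ) → Submodule K (Faces Δ k → K)
  | 0 => ⊤
  | j + 1 => LinearMap.ker (bdry K Δ j)

/-- The reduced simplicial homology `H̃_{k-1}(Δ; K)` (indexed so that `k` is the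
cardinality of the faces involved): cycles modulo boundaries. -/
noncomputable abbrev redHomology (Δ : Finset (Finset V)) (k : ℕ) :=
  cycles K Δ k ⧸ (LinearMap.range (bdry K Δ k)).comap (cycles K Δ k).subtype

/-- `Δ` (of dimension `d-1`) is Gorenstein* over `K`: for every face `F ∈ Δ`, the link of
`F` has the reduced homology of a sphere of dimension `d - 1 - #F`. -/
def IsGorensteinStar (d : ℕ) (Δ : Finset (Finset V)) : Prop :=
  ∀ F ∈ Δ, ∀ k : ℕ,
    (k = d - F.card → Nonempty (redHomology K (link Δ F) k ≃ₗ[K] K)) ∧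
    (k ≠ d - F.card → Subsingleton (redHomology K (link Δ F) k))

end Homology

/-- The flag `f`-number `f_S(Δ) = #{F ∈ Δ : κ(F) = S}`. -/
def fFlag {d : ℕ} (κ : V → Fin d) (Δ : Finset (Finset V)) (S : Finset (Fin d)) : ℕ :=
  (Δ.filter fun F => F.image κ = S).card

/-- The flag `h`-number `h_S(Δ) = ∑_{T ⊆ S} (-1)^{#S - #T} f_T(Δ)`. -/
def hFlag {d : ℕ} (κ : V → Fin d) (Δ : Finset (Finset V)) (S : Finset (Fin d)) : ℤ :=
  ∑ T ∈ S.powerset, (-1 : ℤ) ^ (S.card - T.card) * fFlag κ Δ T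

/-- Index map `[d] → {0,1,…,p}`: a color `i ∈ S = {1,…,p}` goes to the coordinate `i`
of `ℤ^{p+1}` (here: color `i` with `i < p` goes to coordinate `i + 1`), and the colors
in `T = {p+1,…,d}` go to coordinate `0`. -/
def sIdx (p : ℕ) {d : ℕ} (i : Fin d) : Fin (p + 1) :=
  if h : (i : ℕ) < p then ⟨(i : ℕ) + 1, by omega⟩ else 0

/-- The `ℤ^{p+1}`-grading weights (`ℕ`-valued): `deg x_v = e_{κ(v)}` if `κ(v) ∈ S`
and `deg x_v = e_0` if `κ(v) ∈ T`. -/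
noncomputable def wtN (p : ℕ) {n d : ℕ} (κ : Fin n → Fin d) (v : Fin n) : Fin (p + 1) →₀ ℕ :=
  Finsupp.single (sIdx p (κ v)) 1

/-- The `ℤ^{p+1}`-grading weights (`ℤ`-valued). -/
noncomputable def wtZ (p : ℕ) {n d : ℕ} (κ : Fin n → Fin d) (v : Fin n) : Fin (p + 1) →₀ ℤ :=
  Finsupp.single (sIdx p (κ v)) 1


section LinkSurjAux

variable {n d : ℕ} {K : Type*} [Field K]

private lemma prodX_eq_monomial (F : Finset (Fin n)) :
    (∏ v ∈ F, MvPolynomial.X v : MvPolynomial (Fin n) K)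
      = MvPolynomial.monomial (∑ v ∈ F, Finsupp.single v 1) 1 := by
  classical
  induction F using Finset.cons_induction with
  | empty => simp
  | cons a s h ih =>
    rw [Finset.prod_cons, ih, Finset.sum_cons,
      show (MvPolynomial.X a : MvPolynomial (Fin n) K)
        = MvPolynomial.monomial (Finsupp.single a 1) 1 from rfl,
      MvPolynomial.monomial_mul, one_mul]

private lemma face_injOn {Δ : Finset (Finset (Fin n))} (hΔ : IsComplex Δ)
    {κ : Fin n → Fin d} (hκ : IsBalanced d Δ κ) {F : Finset (Fin n)} (hF : F ∈ Δ) :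
    ∀ u ∈ F, ∀ v ∈ F, κ u = κ v → u = v := by
  intro u hu v hv he
  by_contra hne
  have hsub : ({u, v} : Finset (Fin n)) ⊆ F :=
    Finset.insert_subset hu (Finset.singleton_subset_iff.2 hv)
  have hpair : ({u, v} : Finset (Fin n)) ∈ Δ := hΔ.2 F hF _ hsub
  exact hκ _ hpair (Finset.card_pair hne) u (by simp) v (by simp) hne he

end LinkSurjAux

set_option maxHeartbeats 8000000 in
theorem link_surjection_aux (K : Type*) [Field K] [Infinite K] (n d p : ℕ)
    (hp : p ≤ d) (Δ : Finset (Finset (Fin n))) (hΔ : IsComplex Δ) (hdim : DimEq d Δ)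
    (κ : Fin n → Fin d) (hκ : IsBalanced d Δ κ)
    (θ : Fin d → MvPolynomial (Fin n) K)
    (hθS : ∀ i : Fin d, (i : ℕ) < p → θ i = colorSum K κ i)
    (hθT : ∀ i : Fin d, p ≤ (i : ℕ) →
      θ i ∈ Submodule.span K
        {f : MvPolynomial (Fin n) K | ∃ v : Fin n, p ≤ (κ v : ℕ) ∧ f = MvPolynomial.X v})
    (hlsop : IsLSOP K (srIdeal K Δ) θ) :
    -- the ideal defining `A/ΘA`
    ∀ I' : Ideal (MvPolynomial (Fin n) K), I' = srIdeal K Δ ⊔ Ideal.span (Set.range θ) →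
    -- the ideals defining the summands of `N`
    ∀ IF : Finset (Fin n) → Ideal (MvPolynomial (Fin n) K),
      (∀ F, IF F = srIdeal K (link Δ F) ⊔
        Ideal.span (Set.range fun j : Fin (d - p) => θ ⟨p + (j : ℕ), by have := j.2; omega⟩)) →
    -- `e_S = e_1 + ⋯ + e_p`
    ∀ eS : Fin (p + 1) →₀ ℕ,
      eS = ∑ i ∈ Finset.univ.erase (0 : Fin (p + 1)), Finsupp.single i 1 →
    ∃ ψ : (∀ F : {F : Finset (Fin n) //
            F ∈ Δ ∧ F.image κ = Finset.univ.filter fun j : Fin d => (j : ℕ) < p},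
          MvPolynomial (Fin n) K ⧸ IF F.1) →ₗ[MvPolynomial (Fin n) K]
          MvPolynomial (Fin n) K ⧸ I',
      -- surjectivity onto `(A/ΘA)_{≥ e_S}`
      LinearMap.range ψ = Submodule.map (Submodule.mkQ I')
          (Ideal.span {m | ∃ μ : Fin n →₀ ℕ,
            eS ≤ Finsupp.weight (wtN p κ) μ ∧ m = MvPolynomial.monomial μ 1}) ∧
      -- `ψ` is degree-preserving as a map `N(-e_S) → (A/ΘA)_{≥ e_S}`
      ∀ (c : Fin (p + 1) →₀ ℕ) x,
        (∀ F, x F ∈ wpiece K (wtN p κ) (IF F.1) c) → ψ x ∈ wpiece K (wtN p κ) I' (c + eS) := by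
  classical
  intro I' hI' IF hIF eS heS
  -- basic membership facts for I'
  have hsrle : srIdeal K Δ ≤ I' := by rw [hI']; exact le_sup_left
  have hθI : ∀ i : Fin d, θ i ∈ I' := fun i => by
    rw [hI']; exact Ideal.mem_sup_right (Ideal.subset_span ⟨i, rfl⟩)
  -- Lemma C : for a rainbow facet-of-S F and v ∈ F, X v * x^F ∈ I'
  have hXF : ∀ F : Finset (Fin n), F ∈ Δ →
      F.image κ = (Finset.univ.filter fun j : Fin d => (j : ℕ) < p) →
      ∀ v ∈ F, MvPolynomial.X v * ∏ u ∈ F, MvPolynomial.X u ∈ I' := by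
    intro F hFΔ hFim v hv
    have hvp : (κ v : ℕ) < p := by
      have hmem : κ v ∈ F.image κ := Finset.mem_image_of_mem κ hv
      rw [hFim] at hmem
      exact (Finset.mem_filter.1 hmem).2
    have hsum : θ (κ v) * ∏ u ∈ F, MvPolynomial.X u
        = ∑ u ∈ Finset.univ.filter (fun u => κ u = κ v),
            MvPolynomial.X u * ∏ w ∈ F, MvPolynomial.X w := by
      rw [hθS (κ v) hvp, colorSum, Finset.sum_mul]
    have hrest : ∀ u ∈ (Finset.univ.filter (fun u => κ u = κ v)).erase v,
        MvPolynomial.X u * ∏ w ∈ F, MvPolynomial.X w ∈ I' := by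
      intro u hu
      obtain ⟨hune, hu2⟩ := Finset.mem_erase.1 hu
      have hκu : κ u = κ v := (Finset.mem_filter.1 hu2).2
      have huF : u ∉ F := fun h => hune (face_injOn hΔ hκ hFΔ u h v hv hκu)
      have hins : insert u F ∉ Δ := by
        intro hins
        have hsub : ({u, v} : Finset (Fin n)) ⊆ insert u F :=
          Finset.insert_subset (Finset.mem_insert_self u F)
            (Finset.singleton_subset_iff.2 (Finset.mem_insert_of_mem hv))
        have hpair : ({u, v} : Finset (Fin n)) ∈ Δ := hΔ.2 _ hins _ hsub
        exact hκ _ hpair (Finset.card_pair hune) u (by simp) v (by simp) hune hκu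
      have heq : MvPolynomial.X u * ∏ w ∈ F, MvPolynomial.X w
          = (∏ w ∈ insert u F, MvPolynomial.X w : MvPolynomial (Fin n) K) :=
        (Finset.prod_insert huF).symm
      rw [heq]
      exact hsrle (Ideal.subset_span ⟨insert u F, hins, rfl⟩)
    have hv' : v ∈ Finset.univ.filter (fun u => κ u = κ v) := by simp
    have key : MvPolynomial.X v * ∏ u ∈ F, MvPolynomial.X u
        = θ (κ v) * ∏ u ∈ F, MvPolynomial.X u
          - ∑ u ∈ (Finset.univ.filter (fun u => κ u = κ v)).erase v,
              MvPolynomial.X u * ∏ w ∈ F, MvPolynomial.X w := by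
      rw [hsum, ← Finset.add_sum_erase _ _ hv']; ring
    rw [key]
    exact sub_mem (Ideal.mul_mem_right _ _ (hθI _)) (Ideal.sum_mem _ hrest)
  -- Lemma A : IF F multiplied by x^F lands in I'
  have hMul : ∀ F : Finset (Fin n), F ∈ Δ →
      F.image κ = (Finset.univ.filter fun j : Fin d => (j : ℕ) < p) →
      ∀ g ∈ IF F, g * ∏ u ∈ F, MvPolynomial.X u ∈ I' := by
    intro F hFΔ hFim
    have hle : IF F ≤ Submodule.comap
        (LinearMap.mulLeft (MvPolynomial (Fin n) K) (∏ u ∈ F, MvPolynomial.X u)) I' := by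
      rw [hIF]
      apply sup_le
      · rw [srIdeal, Ideal.span_le]
        rintro m ⟨G, hG, rfl⟩
        simp only [SetLike.mem_coe, Submodule.mem_comap, LinearMap.mulLeft_apply]
        by_cases hFG : F ∪ G ∈ Δ
        · have hGΔ : G ∈ Δ := hΔ.2 _ hFG G Finset.subset_union_right
          have hnd : ¬ Disjoint F G := by
            intro hdis
            exact hG (Finset.mem_filter.2 ⟨hGΔ, hdis, hFG⟩)
          obtain ⟨a, haF, haG⟩ := Finset.not_disjoint_iff.1 hnd
          have heq : ((∏ u ∈ F, MvPolynomial.X u) * ∏ u ∈ G, MvPolynomial.X u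
                : MvPolynomial (Fin n) K)
              = (∏ u ∈ G.erase a, MvPolynomial.X u)
                * (MvPolynomial.X a * ∏ u ∈ F, MvPolynomial.X u) := by
            rw [← Finset.mul_prod_erase G _ haG]; ring
          rw [heq]
          exact Ideal.mul_mem_left _ _ (hXF F hFΔ hFim a haF)
        · have heq : ((∏ u ∈ F, MvPolynomial.X u) * ∏ u ∈ G, MvPolynomial.X u
                : MvPolynomial (Fin n) K)
              = (∏ u ∈ F ∪ G, MvPolynomial.X u) * ∏ u ∈ F ∩ G, MvPolynomial.X u :=
            (Finset.prod_union_inter).symm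
          rw [heq]
          exact Ideal.mul_mem_right _ _ (hsrle (Ideal.subset_span ⟨F ∪ G, hFG, rfl⟩))
      · rw [Ideal.span_le]
        rintro m ⟨j, rfl⟩
        simp only [SetLike.mem_coe, Submodule.mem_comap, LinearMap.mulLeft_apply]
        exact Ideal.mul_mem_left _ _ (hθI _)
    intro g hg
    have h2 := Submodule.mem_comap.1 (hle hg)
    rw [LinearMap.mulLeft_apply] at h2
    rwa [mul_comm]
  -- the index type
  haveI : Fintype {F : Finset (Fin n) //
      F ∈ Δ ∧ F.image κ = Finset.univ.filter fun j : Fin d => (j : ℕ) < p} :=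
    Subtype.fintype _
  -- the component maps
  have hker : ∀ F : {F : Finset (Fin n) //
      F ∈ Δ ∧ F.image κ = Finset.univ.filter fun j : Fin d => (j : ℕ) < p},
      IF F.1 ≤ LinearMap.ker ((Submodule.mkQ I').comp
        (LinearMap.mulLeft (MvPolynomial (Fin n) K) (∏ u ∈ F.1, MvPolynomial.X u))) := by
    intro F g hg
    simp only [LinearMap.mem_ker, LinearMap.comp_apply, LinearMap.mulLeft_apply,
      Submodule.mkQ_apply, Submodule.Quotient.mk_eq_zero]
    rw [mul_comm]
    exact hMul F.1 F.2.1 F.2.2 g hg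
  let ψF : ∀ F : {F : Finset (Fin n) //
      F ∈ Δ ∧ F.image κ = Finset.univ.filter fun j : Fin d => (j : ℕ) < p},
      (MvPolynomial (Fin n) K ⧸ IF F.1) →ₗ[MvPolynomial (Fin n) K]
        MvPolynomial (Fin n) K ⧸ I' :=
    fun F => Submodule.liftQ (IF F.1) ((Submodule.mkQ I').comp
      (LinearMap.mulLeft (MvPolynomial (Fin n) K) (∏ u ∈ F.1, MvPolynomial.X u))) (hker F)
  have hψFmk : ∀ F, ∀ g : MvPolynomial (Fin n) K,
      ψF F (Submodule.Quotient.mk g)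
        = (Submodule.Quotient.mk ((∏ u ∈ F.1, MvPolynomial.X u) * g)
            : MvPolynomial (Fin n) K ⧸ I') := fun F g => rfl
  -- weight of the generator of a rainbow face
  have hwt_single : ∀ v : Fin n,
      Finsupp.weight (wtN p κ) (Finsupp.single v 1) = Finsupp.single (sIdx p (κ v)) 1 := by
    intro v
    rw [Finsupp.weight_apply, Finsupp.sum_single_index]
    · rw [one_smul, wtN]
    · rw [zero_smul]
  have himg : (Finset.univ.filter fun i : Fin d => (i : ℕ) < p).image (sIdx p)
      = Finset.univ.erase (0 : Fin (p + 1)) := by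
    ext j
    simp only [Finset.mem_image, Finset.mem_filter, Finset.mem_univ, true_and,
      Finset.mem_erase, and_true]
    constructor
    · rintro ⟨i, hi, rfl⟩
      rw [sIdx, dif_pos hi]
      intro h0
      have h1 := congrArg Fin.val h0
      simp at h1
    · intro hj
      have hjv : (j : ℕ) ≠ 0 := fun h => hj (Fin.ext (by simp [h]))
      have hjp : (j : ℕ) < p + 1 := j.2
      have hlt : (j : ℕ) - 1 < d := by omega
      have hltp : ((⟨(j : ℕ) - 1, hlt⟩ : Fin d) : ℕ) < p := show (j : ℕ) - 1 < p by omega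
      refine ⟨⟨(j : ℕ) - 1, hlt⟩, hltp, ?_⟩
      rw [sIdx, dif_pos hltp]
      exact Fin.ext (show (j : ℕ) - 1 + 1 = (j : ℕ) by omega)
  have hsIdx_inj : ∀ i ∈ Finset.univ.filter (fun i : Fin d => (i : ℕ) < p),
      ∀ i' ∈ Finset.univ.filter (fun i : Fin d => (i : ℕ) < p),
      sIdx p i = sIdx p i' → i = i' := by
    intro i hi i' hi' h
    rw [Finset.mem_filter] at hi hi'
    rw [sIdx, sIdx, dif_pos hi.2, dif_pos hi'.2] at h
    exact Fin.ext (by have h1 := congrArg Fin.val h; simpa using h1)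
  have hwtface : ∀ F : {F : Finset (Fin n) //
      F ∈ Δ ∧ F.image κ = Finset.univ.filter fun j : Fin d => (j : ℕ) < p},
      Finsupp.weight (wtN p κ) (∑ v ∈ F.1, Finsupp.single v 1) = eS := by
    intro F
    rw [map_sum, Finset.sum_congr rfl (fun v (_ : v ∈ F.1) => hwt_single v)]
    have h2 : ∑ v ∈ F.1, Finsupp.single (sIdx p (κ v)) (1 : ℕ)
        = ∑ i ∈ F.1.image κ, Finsupp.single (sIdx p i) 1 :=
      (Finset.sum_image (f := fun i => Finsupp.single (sIdx p i) (1 : ℕ))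
        fun u hu v hv h => face_injOn hΔ hκ F.2.1 u hu v hv h).symm
    rw [h2, F.2.2, ← Finset.sum_image (f := fun j => Finsupp.single j (1 : ℕ)) hsIdx_inj,
      himg, ← heS]
  have hψsingle : ∀ Fι, ∀ q : MvPolynomial (Fin n) K ⧸ IF Fι.1,
      (∑ F', (ψF F').comp (LinearMap.proj F')) (Pi.single Fι q) = ψF Fι q := by
    intro Fι q
    rw [LinearMap.sum_apply]
    refine (Finset.sum_eq_single Fι ?_ ?_).trans ?_
    · intro b _ hb
      rw [LinearMap.comp_apply, LinearMap.proj_apply, Pi.single_eq_of_ne hb, map_zero]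
    · intro h; exact absurd (Finset.mem_univ _) h
    · rw [LinearMap.comp_apply, LinearMap.proj_apply, Pi.single_eq_same]
  refine ⟨∑ F, (ψF F).comp (LinearMap.proj F), ?_, ?_⟩
  · -- range equality
    apply le_antisymm
    · rintro y ⟨x, rfl⟩
      rw [LinearMap.sum_apply]
      apply Submodule.sum_mem
      intro F _
      rw [LinearMap.comp_apply, LinearMap.proj_apply]
      obtain ⟨g, hg⟩ := Submodule.mkQ_surjective (IF F.1) (x F)
      rw [← hg, Submodule.mkQ_apply, hψFmk, ← Submodule.mkQ_apply (I' : Ideal (MvPolynomial (Fin n) K))]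
      refine Submodule.mem_map_of_mem (Ideal.mul_mem_right _ _ ?_)
      exact Ideal.subset_span
        ⟨∑ v ∈ F.1, Finsupp.single v 1, le_of_eq (hwtface F).symm, prodX_eq_monomial _⟩
    · rw [← Ideal.submodule_span_eq, Submodule.map_span, Submodule.span_le]
      rintro y ⟨m, ⟨μ, hμ, rfl⟩, rfl⟩
      have hex : ∀ i : Fin p, ∃ v : Fin n, μ v ≠ 0 ∧ κ v = ⟨(i : ℕ), lt_of_lt_of_le i.2 hp⟩ := by
        intro i
        set j : Fin (p + 1) := ⟨(i : ℕ) + 1, Nat.succ_lt_succ i.2⟩ with hj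
        have hj0 : j ≠ 0 := by
          intro h; have h1 := congrArg Fin.val h; simp [hj] at h1
        have heSj : eS j = 1 := by
          rw [heS, Finsupp.finset_sum_apply, Finset.sum_eq_single j]
          · simp
          · intro b _ hb; exact Finsupp.single_eq_of_ne' hb
          · intro h; exact absurd (Finset.mem_erase.2 ⟨hj0, Finset.mem_univ j⟩) h
        have hge : 1 ≤ (Finsupp.weight (wtN p κ) μ) j := by
          have h4 := Finsupp.le_def.1 hμ j
          omega
        have hco : (Finsupp.weight (wtN p κ) μ) j
            = ∑ v ∈ μ.support, μ v * (Finsupp.single (sIdx p (κ v)) (1 : ℕ)) j := by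
          rw [Finsupp.weight_apply, Finsupp.sum, Finsupp.finset_sum_apply]
          refine Finset.sum_congr rfl fun v _ => ?_
          rw [wtN, Finsupp.smul_apply, smul_eq_mul]
        have hne : ∑ v ∈ μ.support, μ v * (Finsupp.single (sIdx p (κ v)) (1 : ℕ)) j ≠ 0 := by
          rw [← hco]; omega
        obtain ⟨v, hvs, hvne⟩ := Finset.exists_ne_zero_of_sum_ne_zero hne
        have hsv : sIdx p (κ v) = j := by
          by_contra hc
          rw [Finsupp.single_eq_of_ne' hc, mul_zero] at hvne
          exact hvne rfl
        have hκvp : (κ v : ℕ) < p := by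
          by_contra hc
          rw [sIdx, dif_neg hc] at hsv
          have h1 := congrArg Fin.val hsv
          simp [hj] at h1
        have hκv : κ v = ⟨(i : ℕ), lt_of_lt_of_le i.2 hp⟩ := by
          rw [sIdx, dif_pos hκvp] at hsv
          have h3 := congrArg Fin.val hsv
          exact Fin.ext (by simpa [hj] using h3)
        exact ⟨v, Finsupp.mem_support_iff.1 hvs, hκv⟩
      choose vv hv0 hvκ using hex
      set F : Finset (Fin n) := Finset.image vv Finset.univ with hF
      have hFmem : ∀ u ∈ F, μ u ≠ 0 := by
        intro u hu
        obtain ⟨i, _, rfl⟩ := Finset.mem_image.1 hu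
        exact hv0 i
      have hFim : F.image κ = Finset.univ.filter fun j : Fin d => (j : ℕ) < p := by
        rw [hF, Finset.image_image]
        ext jj
        simp only [Finset.mem_image, Finset.mem_univ, true_and, Function.comp,
          Finset.mem_filter]
        constructor
        · rintro ⟨i, rfl⟩
          rw [hvκ i]
          exact i.2
        · intro hjj
          refine ⟨⟨(jj : ℕ), hjj⟩, ?_⟩
          rw [hvκ]
      set τ : Fin n →₀ ℕ := ∑ u ∈ F, Finsupp.single u 1 with hτ
      have hτle : τ ≤ μ := by
        rw [Finsupp.le_def]
        intro u
        by_cases hu : u ∈ F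
        · have ht1 : τ u = 1 := by
            rw [hτ, Finsupp.finset_sum_apply]
            simp only [Finsupp.single_apply]
            rw [Finset.sum_ite_eq' F u (fun _ => 1), if_pos hu]
          rw [ht1]
          exact Nat.one_le_iff_ne_zero.2 (hFmem u hu)
        · have ht0 : τ u = 0 := by
            rw [hτ, Finsupp.finset_sum_apply]
            simp only [Finsupp.single_apply]
            rw [Finset.sum_ite_eq' F u (fun _ => 1), if_neg hu]
          rw [ht0]
          exact Nat.zero_le _
      have hsplit : (MvPolynomial.monomial μ 1 : MvPolynomial (Fin n) K)
          = (∏ u ∈ F, MvPolynomial.X u) * MvPolynomial.monomial (μ - τ) 1 := by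
        rw [prodX_eq_monomial, ← hτ, MvPolynomial.monomial_mul, one_mul,
          add_tsub_cancel_of_le hτle]
      by_cases hFΔ : F ∈ Δ
      · refine ⟨Pi.single ⟨F, hFΔ, hFim⟩
            (Submodule.Quotient.mk (MvPolynomial.monomial (μ - τ) 1)), ?_⟩
        rw [hψsingle, hψFmk, Submodule.mkQ_apply, hsplit]
      · have hmem : (MvPolynomial.monomial μ 1 : MvPolynomial (Fin n) K) ∈ I' := by
          rw [hsplit]
          exact Ideal.mul_mem_right _ _ (hsrle (Ideal.subset_span ⟨F, hFΔ, rfl⟩))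
        rw [Submodule.mkQ_apply, (Submodule.Quotient.mk_eq_zero _).2 hmem]
        exact zero_mem _
  · -- degree preservation
    intro c x hx
    simp only [wpiece] at hx ⊢
    have hch : ∀ F : {F : Finset (Fin n) //
        F ∈ Δ ∧ F.image κ = Finset.univ.filter fun j : Fin d => (j : ℕ) < p},
        ∃ g, g ∈ MvPolynomial.weightedHomogeneousSubmodule K (wtN p κ) c ∧
          Submodule.Quotient.mk g = x F := by
      intro F
      obtain ⟨g, hg1, hg2⟩ := Submodule.mem_map.1 (hx F)
      exact ⟨g, hg1, by rw [← hg2]; rfl⟩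
    choose g hg1 hg2 using hch
    rw [LinearMap.sum_apply]
    have hterm : ∀ F ∈ (Finset.univ : Finset {F : Finset (Fin n) //
        F ∈ Δ ∧ F.image κ = Finset.univ.filter fun j : Fin d => (j : ℕ) < p}),
        ((ψF F).comp (LinearMap.proj F)) x
          = (Submodule.Quotient.mk ((∏ u ∈ F.1, MvPolynomial.X u) * g F)
              : MvPolynomial (Fin n) K ⧸ I') := by
      intro F _
      rw [LinearMap.comp_apply, LinearMap.proj_apply, ← hg2 F, hψFmk]
    rw [Finset.sum_congr rfl hterm]
    simp only [← Submodule.mkQ_apply]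
    rw [← map_sum]
    refine Submodule.mem_map.2 ⟨∑ F, (∏ u ∈ F.1, MvPolynomial.X u) * g F, ?_, rfl⟩
    apply Submodule.sum_mem
    intro F _
    have h1 : MvPolynomial.IsWeightedHomogeneous (wtN p κ)
        (∏ u ∈ F.1, MvPolynomial.X u : MvPolynomial (Fin n) K) eS := by
      rw [prodX_eq_monomial]
      exact MvPolynomial.isWeightedHomogeneous_monomial _ _ _ (hwtface F)
    have h2 := (MvPolynomial.mem_weightedHomogeneousSubmodule _ _ _ _).1 (hg1 F)
    rw [MvPolynomial.mem_weightedHomogeneousSubmodule, add_comm c eS]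
    exact h1.mul h2



set_option maxHeartbeats 1000000 in
/-- Lemma 2.3(i).
With `S = {1,…,p}`, `T = {p+1,…,d}` and `Θ` an l.s.o.p. of `A = K[Δ]` as in the paper,
let `N = ⊕_{F ∈ Δ, κ(F) = S} K[lk_Δ(F)]/(Θ'_T K[lk_Δ(F)])`. There is a surjective,
degree-preserving `R`-module homomorphism `ψ : N(-e_S) → (A/ΘA)_{≥ e_S}`: i.e. a map
`ψ : N → A/ΘA` whose range is `(A/ΘA)_{≥ e_S}` and with `ψ(N_c) ⊆ (A/ΘA)_{c + e_S}`
for every degree `c ∈ ℤ^{p+1}`. -/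
theorem link_surjection (K : Type*) [Field K] [Infinite K] (n d p : ℕ)
    (hp : p ≤ d) (Δ : Finset (Finset (Fin n))) (hΔ : IsComplex Δ) (hdim : DimEq d Δ)
    (κ : Fin n → Fin d) (hκ : IsBalanced d Δ κ)
    (θ : Fin d → MvPolynomial (Fin n) K)
    (hθS : ∀ i : Fin d, (i : ℕ) < p → θ i = colorSum K κ i)
    (hθT : ∀ i : Fin d, p ≤ (i : ℕ) →
      θ i ∈ Submodule.span K
        {f : MvPolynomial (Fin n) K | ∃ v : Fin n, p ≤ (κ v : ℕ) ∧ f = MvPolynomial.X v})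
    (hlsop : IsLSOP K (srIdeal K Δ) θ) :
    -- the ideal defining `A/ΘA`
    ∀ I' : Ideal (MvPolynomial (Fin n) K), I' = srIdeal K Δ ⊔ Ideal.span (Set.range θ) →
    -- the ideals defining the summands of `N`
    ∀ IF : Finset (Fin n) → Ideal (MvPolynomial (Fin n) K),
      (∀ F, IF F = srIdeal K (link Δ F) ⊔
        Ideal.span (Set.range fun j : Fin (d - p) => θ ⟨p + (j : ℕ), by omega⟩)) →
    -- `e_S = e_1 + ⋯ + e_p`
    ∀ eS : Fin (p + 1) →₀ ℕ,
      eS = ∑ i ∈ Finset.univ.erase (0 : Fin (p + 1)), Finsupp.single i 1 →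
    ∃ ψ : (∀ F : {F : Finset (Fin n) //
            F ∈ Δ ∧ F.image κ = Finset.univ.filter fun j : Fin d => (j : ℕ) < p},
          MvPolynomial (Fin n) K ⧸ IF F.1) →ₗ[MvPolynomial (Fin n) K]
          MvPolynomial (Fin n) K ⧸ I',
      -- surjectivity onto `(A/ΘA)_{≥ e_S}`
      LinearMap.range ψ = Submodule.map (Submodule.mkQ I')
          (Ideal.span {m | ∃ μ : Fin n →₀ ℕ,
            eS ≤ Finsupp.weight (wtN p κ) μ ∧ m = MvPolynomial.monomial μ 1}) ∧
      -- `ψ` is degree-preserving as a map `N(-e_S) → (A/ΘA)_{≥ e_S}`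
      ∀ (c : Fin (p + 1) →₀ ℕ) x,
        (∀ F, x F ∈ wpiece K (wtN p κ) (IF F.1) c) → ψ x ∈ wpiece K (wtN p κ) I' (c + eS) :=
  link_surjection_aux K n d p hp Δ hΔ hdim κ hκ θ hθS hθT hlsop

end BGLB
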